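/- Let V' be a nonempty set of vertices of the tree G such that the subgraph induced by G on V' is connected. Then there exists a unique vertex o' ∈ V' realizing the distance from the root to V': o' ∈ V' and d o o' ≤ d o x for all x ∈ V', and any o'' ∈ V' with this property equals o'. (The vertex o' is the root of the subtree with vertex set V'.) -/

import Mathlib

section aux
variable {V : Type*} {G : SimpleGraph V} [DecidableEq V]

/-- Vertices on a walk from `o` are within `p.length` of `o`. -/
private lemma dist_le_of_mem_support' {o v x : V} (p : G.Walk o v) (hx : x ∈ p.support) :
    G.dist o x ≤ p.length :=
  le_trans (SimpleGraph.dist_le (p.takeUntil x hx)) (p.length_takeUntil_le hx)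

/-- On a geodesic from `o` to `v`, the only vertex at distance `G.dist o v` is `v`. -/
private lemma eq_end_of_mem_support_geodesic' {o v x : V} (p : G.Walk o v)
    (hlen : p.length = G.dist o v) (hx : x ∈ p.support)
    (hd : G.dist o x = G.dist o v) : x = v := by
  have h1 : G.dist o x ≤ (p.takeUntil x hx).length := SimpleGraph.dist_le _
  have h2 : (p.takeUntil x hx).length + (p.dropUntil x hx).length = p.length := by
    rw [← SimpleGraph.Walk.length_append, p.take_spec hx]
  have h3 : (p.dropUntil x hx).length = 0 := by omega
  exact SimpleGraph.Walk.eq_of_length_eq_zero h3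

omit [DecidableEq V] in
private lemma concat_isPath' {o u w : V} (p : G.Walk o u) (hp : p.IsPath) (h : G.Adj u w)
    (hw : w ∉ p.support) : (p.concat h).IsPath := by
  rw [SimpleGraph.Walk.isPath_def, SimpleGraph.Walk.support_concat]
  simp only [List.concat_eq_append, List.nodup_append, List.nodup_singleton]
  exact ⟨hp.support_nodup, by simp; intro a ha h; exact hw (h ▸ ha)⟩

/-- In a tree, adjacent vertices are at different distances from any root. -/
private lemma adj_dist_ne' (hG : G.IsTree) (o : V) {u w : V} (h : G.Adj u w) :
    G.dist o u ≠ G.dist o w := by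
  intro heq
  obtain ⟨p, hp⟩ := hG.isConnected.exists_walk_length_eq_dist o u
  have hpath : p.bypass.IsPath := p.bypass_isPath
  have hplen : p.bypass.length = G.dist o u :=
    le_antisymm (hp ▸ p.length_bypass_le) (SimpleGraph.dist_le _)
  have hw : w ∉ p.bypass.support := by
    intro hw
    have : w = u := eq_end_of_mem_support_geodesic' p.bypass hplen hw (heq.symm)
    exact G.ne_of_adj h.symm this
  have hq : (p.bypass.concat h).IsPath := concat_isPath' _ hpath h hw
  obtain ⟨q, hq2⟩ := hG.isConnected.exists_walk_length_eq_dist o w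
  have hq2path : q.bypass.IsPath := q.bypass_isPath
  have hq2len : q.bypass.length = G.dist o w :=
    le_antisymm (hq2 ▸ q.length_bypass_le) (SimpleGraph.dist_le _)
  have heq' := (hG.existsUnique_path o w).unique hq hq2path
  have hlen : (p.bypass.concat h).length = q.bypass.length := by rw [heq']
  rw [SimpleGraph.Walk.length_concat, hplen, hq2len] at hlen
  omega

/-- In a tree, a vertex cannot have two distinct neighbors both one step closer to `o`. -/
private lemma no_two_parents' (hG : G.IsTree) (o : V) {u v w : V} (huv : u ≠ v)
    (hu : G.Adj u w) (hv : G.Adj v w)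
    (hdu : G.dist o u + 1 = G.dist o w) (hdv : G.dist o v + 1 = G.dist o w) : False := by
  obtain ⟨p, hp⟩ := hG.isConnected.exists_walk_length_eq_dist o u
  obtain ⟨q, hq⟩ := hG.isConnected.exists_walk_length_eq_dist o v
  have hplen : p.bypass.length = G.dist o u :=
    le_antisymm (hp ▸ p.length_bypass_le) (SimpleGraph.dist_le _)
  have hqlen : q.bypass.length = G.dist o v :=
    le_antisymm (hq ▸ q.length_bypass_le) (SimpleGraph.dist_le _)
  have hwp : w ∉ p.bypass.support := fun hw => by
    have := dist_le_of_mem_support' _ hw; omega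
  have hwq : w ∉ q.bypass.support := fun hw => by
    have := dist_le_of_mem_support' _ hw; omega
  have h1 : (p.bypass.concat hu).IsPath := concat_isPath' _ p.bypass_isPath hu hwp
  have h2 : (q.bypass.concat hv).IsPath := concat_isPath' _ q.bypass_isPath hv hwq
  have heq := (hG.existsUnique_path o w).unique h1 h2
  have hsupp : p.bypass.support.concat w = q.bypass.support.concat w := by
    simp only [List.concat_eq_append]
    rw [← SimpleGraph.Walk.support_concat p.bypass hu, ← SimpleGraph.Walk.support_concat q.bypass hv, heq]
  have hsupp' : p.bypass.support = q.bypass.support := by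
    simpa [List.concat_eq_append] using hsupp
  have hu' : u ∈ q.bypass.support := hsupp' ▸ p.bypass.end_mem_support
  exact huv (eq_end_of_mem_support_geodesic' q.bypass hqlen hu' (by omega))

/-- The key lemma: both endpoints of a path in a tree all of whose vertices are at
distance `≥ G.dist o a` from `o`, with `G.dist o a = G.dist o b`, coincide. -/
private lemma key_lemma' (hG : G.IsTree) (o : V) {a b : V} (p : G.Walk a b) (hp : p.IsPath)
    (hmin : ∀ x ∈ p.support, G.dist o a ≤ G.dist o x) (hab : G.dist o a = G.dist o b) :
    a = b := by
  by_contra hne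
  -- pick a vertex of the path at maximal distance from `o`
  obtain ⟨w, hwmem, hmax⟩ := p.support.toFinset.exists_max_image (fun x => G.dist o x)
    ⟨a, List.mem_toFinset.mpr p.start_mem_support⟩
  rw [List.mem_toFinset] at hwmem
  have hmax' : ∀ x ∈ p.support, G.dist o x ≤ G.dist o w := fun x hx =>
    hmax x (List.mem_toFinset.mpr hx)
  by_cases hMk : G.dist o w = G.dist o a
  · -- the distance is constant along the path; contradicts first edge
    obtain ⟨u, hadj, p₂, hpeq⟩ := SimpleGraph.Walk.not_nil_iff.mp
      (SimpleGraph.Walk.not_nil_of_ne hne (p := p))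
    subst hpeq
    have hu : u ∈ (SimpleGraph.Walk.cons hadj p₂).support := by
      simp [SimpleGraph.Walk.support_cons]
    have h1 : G.dist o a ≤ G.dist o u := hmin u hu
    have h2 : G.dist o u ≤ G.dist o w := hmax' u hu
    exact adj_dist_ne' hG o hadj (by omega)
  · have hM : G.dist o a < G.dist o w :=
      lt_of_le_of_ne (hmin w hwmem) (Ne.symm hMk)
    have hwa : w ≠ a := fun h => by simp [h] at hM
    have hwb : w ≠ b := fun h => by rw [h, ← hab] at hM; omega
    set q := p.takeUntil w hwmem with hqdef
    set r := p.dropUntil w hwmem with hrdef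
    have hqr : q.append r = p := p.take_spec hwmem
    -- last edge of q
    obtain ⟨u, hadju, q₂, hq₂⟩ := SimpleGraph.Walk.not_nil_iff.mp
      (SimpleGraph.Walk.not_nil_of_ne hwa (p := q.reverse))
    -- first edge of r
    obtain ⟨v, hadjv, r₂, hr₂⟩ := SimpleGraph.Walk.not_nil_iff.mp
      (SimpleGraph.Walk.not_nil_of_ne hwb (p := r))
    have huq : u ∈ q.support := by
      have : u ∈ q.reverse.support := by
        rw [hq₂]; simp [SimpleGraph.Walk.support_cons]
      rwa [SimpleGraph.Walk.support_reverse, List.mem_reverse] at this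
    have hvr : v ∈ r.support.tail := by
      rw [hr₂, SimpleGraph.Walk.support_cons]
      exact r₂.start_mem_support
    have hup : u ∈ p.support := p.support_takeUntil_subset hwmem huq
    have hvp : v ∈ p.support := p.support_dropUntil_subset hwmem (List.mem_of_mem_tail hvr)
    -- u ≠ v by nodup of p's support
    have hnodup : (q.append r).support.Nodup := by
      rw [hqr]; exact hp.support_nodup
    rw [SimpleGraph.Walk.support_append, List.nodup_append] at hnodup
    have huv : u ≠ v := fun h => hnodup.2.2 u huq v hvr h
    -- distances of u and v
    have hd1 : G.dist w u = 1 := (SimpleGraph.dist_eq_one_iff_adj).mpr hadju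
    have hd2 : G.dist w v = 1 := (SimpleGraph.dist_eq_one_iff_adj).mpr hadjv
    have htri1 : G.dist o w ≤ G.dist o u + G.dist u w := hG.isConnected.dist_triangle
    have htri2 : G.dist o w ≤ G.dist o v + G.dist v w := hG.isConnected.dist_triangle
    rw [SimpleGraph.dist_comm] at hd1 hd2
    have hne1 : G.dist o u ≠ G.dist o w := adj_dist_ne' hG o hadju.symm
    have hne2 : G.dist o v ≠ G.dist o w := adj_dist_ne' hG o hadjv.symm
    have hle1 : G.dist o u ≤ G.dist o w := hmax' u hup
    have hle2 : G.dist o v ≤ G.dist o w := hmax' v hvp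
    exact no_two_parents' hG o huv hadju.symm hadjv.symm (by omega) (by omega)

end aux

/-- Any nonempty connected set of vertices `V'` of a tree admits a unique vertex `o'`
realizing the distance from the root to `V'`; `o'` is the root of the subtree `V'`. -/
theorem subtree_has_unique_root {V : Type*} (G : SimpleGraph V) (hG : G.IsTree) (o : V)
    (V' : Set V) (hne : V'.Nonempty) (hconn : (G.induce V').Connected) :
    ∃! o' : V, o' ∈ V' ∧ ∀ x ∈ V', G.dist o o' ≤ G.dist o x := by
  classical
  obtain ⟨x0, hx0⟩ := hne
  -- existence via the well-ordering of ℕ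
  set S : Set ℕ := {n | ∃ x ∈ V', G.dist o x = n} with hSdef
  have hS : S.Nonempty := ⟨G.dist o x0, x0, hx0, rfl⟩
  obtain ⟨o', ho', hdo'⟩ := Nat.sInf_mem hS
  have hmin : ∀ x ∈ V', G.dist o o' ≤ G.dist o x := fun x hx =>
    hdo' ▸ Nat.sInf_le ⟨x, hx, rfl⟩
  refine ⟨o', ⟨ho', hmin⟩, ?_⟩
  rintro o'' ⟨ho'', hmin''⟩
  have hk : G.dist o o'' = G.dist o o' :=
    le_antisymm (hmin'' o' ho') (hmin o'' ho'')
  -- a path in `G` from o'' to o' through V'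
  have hr : (G.induce V').Reachable ⟨o'', ho''⟩ ⟨o', ho'⟩ := hconn ⟨o'', ho''⟩ ⟨o', ho'⟩
  obtain ⟨p0⟩ := hr
  let f := (SimpleGraph.Embedding.induce (G := G) V').toHom
  have hinj : Function.Injective f := (SimpleGraph.Embedding.induce (G := G) V').injective
  let p1 : G.Walk o'' o' := p0.bypass.map f
  have hp1 : p1.IsPath :=
    (SimpleGraph.Walk.map_isPath_iff_of_injective hinj).mpr p0.bypass_isPath
  have hsupp : ∀ x ∈ p1.support, x ∈ V' := by
    intro x hx
    have hx' : x ∈ (p0.bypass.map f).support := hx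
    rw [SimpleGraph.Walk.support_map, List.mem_map] at hx'
    obtain ⟨y, _, rfl⟩ := hx'
    exact y.2
  exact key_lemma' hG o p1 hp1
    (fun x hx => hmin'' x (hsupp x hx)) hk
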